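/- arXiv:0907.2419 — 2 statements merged into one kernel-verified Lean document; each statement's English description precedes it below -/
import Mathlib

section
/- For Hermitian n×n matrices H and A and β > 0, log Tr e^{-βH} - (1/2) log Tr e^{-β(H+A)} - (1/2) log Tr e^{-β(H-A)} ≤ (β/2)·‖(H+A) + (H-A) - 2H‖ = 0; more generally, for Hermitian H, A, B, log Tr e^{-βH} - (1/2) log Tr e^{-β(H+A)} - (1/2) log Tr e^{-β(H+B)} ≤ (β/2)‖A + B‖. -/
open Matrix

set_option synthInstance.maxHeartbeats 1000000
set_option maxHeartbeats 1600000

/-- The real part of the trace of the matrix exponential. -/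
noncomputable def trExp {n : ℕ} (A : Matrix (Fin n) (Fin n) ℂ) : ℝ :=
  ((NormedSpace.exp A).trace).re

/-- The operator (spectral) norm of a matrix. -/
noncomputable def opNorm {n : ℕ} (A : Matrix (Fin n) (Fin n) ℂ) : ℝ :=
  ‖Matrix.toEuclideanCLM (𝕜 := ℂ) A‖

namespace PeierlsAux

variable {n : ℕ}

lemma quad_conj (U M : Matrix (Fin n) (Fin n) ℂ) (v : Fin n → ℂ) :
    star v ⬝ᵥ ((U * M * star U) *ᵥ v)
      = star ((star U) *ᵥ v) ⬝ᵥ (M *ᵥ ((star U) *ᵥ v)) := by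
  rw [star_eq_conjTranspose, ← mulVec_mulVec, ← mulVec_mulVec, dotProduct_mulVec (star v),
    star_mulVec, conjTranspose_conjTranspose]

lemma re_diag (g : Fin n → ℝ) (w : Fin n → ℂ) :
    (star w ⬝ᵥ ((diagonal (fun j => (g j : ℂ))) *ᵥ w)).re
      = ∑ j, g j * Complex.normSq (w j) := by
  simp only [dotProduct, mulVec, diagonal, of_apply, Pi.star_apply, ite_mul, zero_mul,
    Finset.sum_ite_eq, Finset.mem_univ, if_true]
  rw [Complex.re_sum]
  congr 1; ext i
  have : (g i : ℂ) * (star (w i) * w i) = ((g i * Complex.normSq (w i) : ℝ) : ℂ) := by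
    rw [Complex.ofReal_mul, Complex.normSq_eq_conj_mul_self, Complex.star_def]
  rw [mul_comm, mul_assoc, mul_comm (w i), this, Complex.ofReal_re]

lemma col_quad (V M : Matrix (Fin n) (Fin n) ℂ) (i : Fin n) :
    star (fun k => V k i) ⬝ᵥ (M *ᵥ (fun k => V k i)) = (star V * M * V) i i := by
  simp only [mul_apply, mulVec, dotProduct, Pi.star_apply, star_apply, Finset.sum_mul,
    Finset.mul_sum]
  rw [Finset.sum_comm]
  apply Finset.sum_congr rfl; intro k _
  apply Finset.sum_congr rfl; intro l _
  ring

lemma exp_spectral {X : Matrix (Fin n) (Fin n) ℂ} (hX : X.IsHermitian) :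
    NormedSpace.exp X = (hX.eigenvectorUnitary : Matrix (Fin n) (Fin n) ℂ)
      * diagonal (fun j => ((Real.exp (hX.eigenvalues j) : ℝ) : ℂ))
      * star (hX.eigenvectorUnitary : Matrix (Fin n) (Fin n) ℂ) := by
  set U := (hX.eigenvectorUnitary : Matrix (Fin n) (Fin n) ℂ) with hU
  have hmem := mem_unitaryGroup_iff.mp hX.eigenvectorUnitary.2
  have hinv : U⁻¹ = star U := inv_eq_right_inv hmem
  have hdet : IsUnit U.det :=
    IsUnit.of_mul_eq_one _ (by rw [← det_mul, hmem, det_one])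
  have hunit : IsUnit U := (isUnit_iff_isUnit_det U).2 hdet
  conv_lhs => rw [hX.spectral_theorem, Unitary.conjStarAlgAut_apply, ← hU, ← hinv]
  rw [Matrix.exp_conj U _ hunit, Matrix.exp_diagonal, hinv]
  have hfun : NormedSpace.exp ((RCLike.ofReal : ℝ → ℂ) ∘ hX.eigenvalues)
      = fun j => ((Real.exp (hX.eigenvalues j) : ℝ) : ℂ) := by
    funext j
    rw [Pi.coe_exp, Function.comp_apply, ← Complex.exp_eq_exp_ℂ]
    exact (Complex.ofReal_exp _).symm
  rw [hfun]

lemma trExp_eq_sum {X : Matrix (Fin n) (Fin n) ℂ} (hX : X.IsHermitian) :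
    trExp X = ∑ j, Real.exp (hX.eigenvalues j) := by
  rw [trExp, exp_spectral hX, trace_mul_cycle,
    mem_unitaryGroup_iff'.mp hX.eigenvectorUnitary.2, one_mul, trace_diagonal]
  rw [← Complex.ofReal_sum, Complex.ofReal_re]

lemma trExp_pos [NeZero n] {X : Matrix (Fin n) (Fin n) ℂ} (hX : X.IsHermitian) :
    0 < trExp X := by
  rw [trExp_eq_sum hX]
  exact Finset.sum_pos (fun i _ => Real.exp_pos _) ⟨⟨0, Nat.pos_of_ne_zero (NeZero.ne n)⟩,
    Finset.mem_univ _⟩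

lemma re_quad {X : Matrix (Fin n) (Fin n) ℂ} (hX : X.IsHermitian) (v : Fin n → ℂ) :
    (star v ⬝ᵥ (X *ᵥ v)).re
      = ∑ j, hX.eigenvalues j
          * Complex.normSq ((star (hX.eigenvectorUnitary : Matrix (Fin n) (Fin n) ℂ) *ᵥ v) j) := by
  conv_lhs => rw [hX.spectral_theorem]
  have : diagonal ((RCLike.ofReal : ℝ → ℂ) ∘ hX.eigenvalues)
      = diagonal (fun j => ((hX.eigenvalues j : ℝ) : ℂ)) := rfl
  rw [this, Unitary.conjStarAlgAut_apply, quad_conj, re_diag]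

lemma re_quad_exp {X : Matrix (Fin n) (Fin n) ℂ} (hX : X.IsHermitian) (v : Fin n → ℂ) :
    (star v ⬝ᵥ ((NormedSpace.exp X) *ᵥ v)).re
      = ∑ j, Real.exp (hX.eigenvalues j)
          * Complex.normSq ((star (hX.eigenvectorUnitary : Matrix (Fin n) (Fin n) ℂ) *ᵥ v) j) := by
  rw [exp_spectral hX, quad_conj, re_diag]

lemma sum_normSq {U : Matrix (Fin n) (Fin n) ℂ} (hU : U ∈ Matrix.unitaryGroup (Fin n) ℂ)
    {v : Fin n → ℂ} (hv : star v ⬝ᵥ v = 1) :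
    ∑ j, Complex.normSq ((star U *ᵥ v) j) = 1 := by
  have h1 : (star ((star U) *ᵥ v) ⬝ᵥ ((1 : Matrix (Fin n) (Fin n) ℂ) *ᵥ ((star U) *ᵥ v))).re
      = ∑ j, Complex.normSq ((star U *ᵥ v) j) := by
    have hone : (1 : Matrix (Fin n) (Fin n) ℂ)
        = diagonal (fun j => (((fun _ => (1:ℝ)) j : ℝ) : ℂ)) := by
      simp
    rw [hone, re_diag]
    simp
  rw [← h1, ← quad_conj, mul_one, mem_unitaryGroup_iff.mp hU, one_mulVec, hv, Complex.one_re]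

lemma peierls_vec {X : Matrix (Fin n) (Fin n) ℂ} (hX : X.IsHermitian) {v : Fin n → ℂ}
    (hv : star v ⬝ᵥ v = 1) :
    Real.exp ((star v ⬝ᵥ (X *ᵥ v)).re) ≤ (star v ⬝ᵥ ((NormedSpace.exp X) *ᵥ v)).re := by
  rw [re_quad hX v, re_quad_exp hX v]
  set p := fun j => Complex.normSq ((star (hX.eigenvectorUnitary : Matrix (Fin n) (Fin n) ℂ)
    *ᵥ v) j) with hp
  have hsum : ∑ j, p j = 1 := sum_normSq hX.eigenvectorUnitary.2 hv
  have := convexOn_exp.map_sum_le (t := Finset.univ) (w := p) (p := hX.eigenvalues)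
    (fun i _ => Complex.normSq_nonneg _) hsum (fun i _ => Set.mem_univ _)
  simpa only [smul_eq_mul, mul_comm] using this

lemma peierls_sum {X : Matrix (Fin n) (Fin n) ℂ} (hX : X.IsHermitian)
    {V : Matrix (Fin n) (Fin n) ℂ} (hV : V ∈ Matrix.unitaryGroup (Fin n) ℂ) :
    ∑ i, Real.exp ((star (fun k => V k i) ⬝ᵥ (X *ᵥ (fun k => V k i))).re) ≤ trExp X := by
  have hcol : ∀ i, star (fun k => V k i) ⬝ᵥ (fun k => V k i) = 1 := by
    intro i
    have := col_quad V 1 i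
    rwa [one_mulVec, mul_one, mem_unitaryGroup_iff'.mp hV, one_apply_eq] at this
  calc ∑ i, Real.exp ((star (fun k => V k i) ⬝ᵥ (X *ᵥ (fun k => V k i))).re)
      ≤ ∑ i, (star (fun k => V k i) ⬝ᵥ ((NormedSpace.exp X) *ᵥ (fun k => V k i))).re :=
        Finset.sum_le_sum (fun i _ => peierls_vec hX (hcol i))
    _ = ∑ i, ((star V * NormedSpace.exp X * V) i i).re := by
        refine Finset.sum_congr rfl (fun i _ => ?_)
        rw [col_quad]
    _ = ((star V * NormedSpace.exp X * V).trace).re := by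
        rw [Matrix.trace, Complex.re_sum]; rfl
    _ = trExp X := by
        rw [trExp, trace_mul_cycle, mem_unitaryGroup_iff.mp hV, one_mul]

lemma re_quad_le_opNorm (W : Matrix (Fin n) (Fin n) ℂ) {v : Fin n → ℂ}
    (hv : star v ⬝ᵥ v = 1) :
    |(star v ⬝ᵥ (W *ᵥ v)).re| ≤ opNorm W := by
  set x : EuclideanSpace ℂ (Fin n) := (WithLp.equiv 2 _).symm v with hx
  have hxv : WithLp.equiv 2 (Fin n → ℂ) x = v := rfl
  have hnx : ‖x‖ = 1 := by
    have h1 : (inner ℂ x x : ℂ) = 1 := by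
      rw [EuclideanSpace.inner_eq_star_dotProduct, dotProduct_comm]; exact hv
    rw [norm_eq_sqrt_re_inner (𝕜 := ℂ), h1]
    simp
  have key : (inner ℂ x ((Matrix.toEuclideanCLM (𝕜 := ℂ) W) x) : ℂ) = star v ⬝ᵥ (W *ᵥ v) := by
    rw [EuclideanSpace.inner_eq_star_dotProduct, dotProduct_comm]
    have h5 : WithLp.equiv 2 ((i : Fin n) → ℂ) ((Matrix.toEuclideanCLM (𝕜 := ℂ) W) x)
        = W *ᵥ v := by
      rw [show WithLp.equiv 2 ((i : Fin n) → ℂ) ((Matrix.toEuclideanCLM (𝕜 := ℂ) W) x)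
          = Matrix.toLin' W (WithLp.equiv 2 _ x) from Matrix.ofLp_toEuclideanCLM W x, hxv,
        toLin'_apply]
    exact congrArg (star v ⬝ᵥ ·) h5
  calc |(star v ⬝ᵥ (W *ᵥ v)).re| = |(inner ℂ x ((Matrix.toEuclideanCLM (𝕜 := ℂ) W) x) : ℂ).re| := by
        rw [key]
    _ ≤ ‖(inner ℂ x ((Matrix.toEuclideanCLM (𝕜 := ℂ) W) x) : ℂ)‖ := Complex.abs_re_le_norm _
    _ ≤ ‖x‖ * ‖(Matrix.toEuclideanCLM (𝕜 := ℂ) W) x‖ := norm_inner_le_norm _ _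
    _ ≤ ‖x‖ * (‖Matrix.toEuclideanCLM (𝕜 := ℂ) W‖ * ‖x‖) :=
        mul_le_mul_of_nonneg_left (ContinuousLinearMap.le_opNorm _ _) (norm_nonneg _)
    _ = opNorm W := by rw [hnx, opNorm]; ring

lemma col_norm {V : Matrix (Fin n) (Fin n) ℂ} (hV : V ∈ Matrix.unitaryGroup (Fin n) ℂ)
    (i : Fin n) : star (fun k => V k i) ⬝ᵥ (fun k => V k i) = 1 := by
  have := col_quad V 1 i
  rwa [one_mulVec, mul_one, mem_unitaryGroup_iff'.mp hV, one_apply_eq] at this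

lemma eig_quad {M : Matrix (Fin n) (Fin n) ℂ} (hM : M.IsHermitian) (i : Fin n) :
    (star (fun k => (hM.eigenvectorUnitary : Matrix (Fin n) (Fin n) ℂ) k i)
      ⬝ᵥ (M *ᵥ (fun k => (hM.eigenvectorUnitary : Matrix (Fin n) (Fin n) ℂ) k i))).re
      = hM.eigenvalues i := by
  have h := col_quad (hM.eigenvectorUnitary : Matrix (Fin n) (Fin n) ℂ) M i
  rw [h, show star (hM.eigenvectorUnitary : Matrix (Fin n) (Fin n) ℂ) * M * (hM.eigenvectorUnitary : Matrix (Fin n) (Fin n) ℂ) = diagonal (RCLike.ofReal ∘ hM.eigenvalues) from by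
    have := hM.conjStarAlgAut_star_eigenvectorUnitary
    rwa [Unitary.conjStarAlgAut_star_apply] at this, diagonal_apply_eq, Function.comp_apply]
  exact Complex.ofReal_re _

lemma stepA {X Y M : Matrix (Fin n) (Fin n) ℂ} (hX : X.IsHermitian) (hY : Y.IsHermitian)
    (hM : M.IsHermitian) (hsum : X + Y = M + M) :
    trExp M ≤ Real.sqrt (trExp X) * Real.sqrt (trExp Y) := by
  set U := (hM.eigenvectorUnitary : Matrix (Fin n) (Fin n) ℂ) with hU
  set col : Fin n → Fin n → ℂ := fun i => (fun k => U k i) with hcol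
  have hsplit : ∀ i, hM.eigenvalues i
      = (star (col i) ⬝ᵥ (X *ᵥ col i)).re / 2 + (star (col i) ⬝ᵥ (Y *ᵥ col i)).re / 2 := by
    intro i
    have h1 : star (col i) ⬝ᵥ ((X + Y) *ᵥ col i)
        = star (col i) ⬝ᵥ ((M + M) *ᵥ col i) := by rw [hsum]
    rw [add_mulVec, dotProduct_add, add_mulVec, dotProduct_add] at h1
    have h2 := congrArg Complex.re h1
    simp only [Complex.add_re] at h2
    rw [eig_quad hM i] at h2
    linarith
  calc trExp M = ∑ i, Real.exp (hM.eigenvalues i) := trExp_eq_sum hM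
    _ = ∑ i, Real.sqrt (Real.exp ((star (col i) ⬝ᵥ (X *ᵥ col i)).re))
          * Real.sqrt (Real.exp ((star (col i) ⬝ᵥ (Y *ᵥ col i)).re)) := by
        refine Finset.sum_congr rfl (fun i _ => ?_)
        rw [hsplit i, Real.exp_add, Real.exp_half, Real.exp_half]
    _ ≤ Real.sqrt (∑ i, Real.exp ((star (col i) ⬝ᵥ (X *ᵥ col i)).re))
          * Real.sqrt (∑ i, Real.exp ((star (col i) ⬝ᵥ (Y *ᵥ col i)).re)) :=
        Real.sum_sqrt_mul_sqrt_le _ (fun i => (Real.exp_pos _).le) (fun i => (Real.exp_pos _).le)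
    _ ≤ Real.sqrt (trExp X) * Real.sqrt (trExp Y) :=
        mul_le_mul (Real.sqrt_le_sqrt (peierls_sum hX hM.eigenvectorUnitary.2))
          (Real.sqrt_le_sqrt (peierls_sum hY hM.eigenvectorUnitary.2)) (Real.sqrt_nonneg _)
          (Real.sqrt_nonneg _)

lemma stepB {P W : Matrix (Fin n) (Fin n) ℂ} (hP : P.IsHermitian) (hW : W.IsHermitian) :
    Real.exp (-(opNorm W)) * trExp P ≤ trExp (P + W) := by
  set U := (hP.eigenvectorUnitary : Matrix (Fin n) (Fin n) ℂ) with hU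
  set col : Fin n → Fin n → ℂ := fun i => (fun k => U k i) with hcol
  have hWb : ∀ i, -(opNorm W) ≤ (star (col i) ⬝ᵥ (W *ᵥ col i)).re := fun i =>
    (abs_le.mp (re_quad_le_opNorm W (col_norm hP.eigenvectorUnitary.2 i))).1
  calc Real.exp (-(opNorm W)) * trExp P
      = ∑ i, Real.exp (-(opNorm W) + hP.eigenvalues i) := by
        rw [trExp_eq_sum hP, Finset.mul_sum]
        exact Finset.sum_congr rfl (fun i _ => (Real.exp_add _ _).symm)
    _ ≤ ∑ i, Real.exp ((star (col i) ⬝ᵥ ((P + W) *ᵥ col i)).re) := by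
        refine Finset.sum_le_sum (fun i _ => Real.exp_le_exp.2 ?_)
        rw [add_mulVec, dotProduct_add, Complex.add_re, eig_quad hP i]
        linarith [hWb i]
    _ ≤ trExp (P + W) := peierls_sum (hP.add hW) hP.eigenvectorUnitary.2

lemma herm_smul {C : Matrix (Fin n) (Fin n) ℂ} (hC : C.IsHermitian) {c : ℂ}
    (hc : star c = c) : (c • C).IsHermitian := by
  rw [Matrix.IsHermitian, conjTranspose_smul, hc, hC.eq]

lemma trExp_zero_dim {M : Matrix (Fin 0) (Fin 0) ℂ} : trExp M = 0 := by
  simp [trExp, Matrix.trace]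

lemma main_ineq {n : ℕ} (β : ℝ) (hβ : 0 < β)
    (H A B : Matrix (Fin n) (Fin n) ℂ)
    (hH : H.IsHermitian) (hA : A.IsHermitian) (hB : B.IsHermitian) :
    Real.log (trExp ((-β : ℂ) • H))
        - (1 / 2) * Real.log (trExp ((-β : ℂ) • (H + A)))
        - (1 / 2) * Real.log (trExp ((-β : ℂ) • (H + B)))
      ≤ (β / 2) * opNorm (A + B) := by
  have hop : 0 ≤ opNorm (A + B) := norm_nonneg _
  rcases Nat.eq_zero_or_pos n with hn | hn
  · subst hn
    rw [trExp_zero_dim, trExp_zero_dim, trExp_zero_dim, Real.log_zero]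
    have : (0:ℝ) ≤ (β / 2) * opNorm (A + B) := mul_nonneg (by linarith) hop
    linarith
  haveI : NeZero n := ⟨hn.ne'⟩
  have hstar : star (-β : ℂ) = (-β : ℂ) := by
    simp
  have hstar2 : star (-(β:ℂ)/2) = -(β:ℂ)/2 := by
    simp
  set X := (-β : ℂ) • (H + A) with hXdef
  set Y := (-β : ℂ) • (H + B) with hYdef
  set P := (-β : ℂ) • H with hPdef
  set W := (-(β:ℂ)/2) • (A + B) with hWdef
  have hXh : X.IsHermitian := herm_smul (hH.add hA) hstar
  have hYh : Y.IsHermitian := herm_smul (hH.add hB) hstar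
  have hPh : P.IsHermitian := herm_smul hH hstar
  have hWh : W.IsHermitian := herm_smul (hA.add hB) hstar2
  have hsum : X + Y = (P + W) + (P + W) := by
    ext i j
    simp only [hXdef, hYdef, hPdef, hWdef, Matrix.add_apply, Matrix.smul_apply, smul_eq_mul]
    ring
  have hA1 := stepA hXh hYh (hPh.add hWh) hsum
  have hB1 := stepB hPh hWh
  have hXpos := trExp_pos hXh
  have hYpos := trExp_pos hYh
  have hPpos := trExp_pos hPh
  have hMpos := trExp_pos (hPh.add hWh)
  have hopW : opNorm W = (β / 2) * opNorm (A + B) := by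
    rw [opNorm, hWdef, _root_.map_smul,
      norm_smul (-(β:ℂ)/2) (Matrix.toEuclideanCLM (𝕜 := ℂ) (A + B)), ← opNorm]
    congr 1
    rw [norm_div, norm_neg]
    simp [abs_of_pos hβ]
  have h1 : Real.log (trExp P) ≤ opNorm W + Real.log (trExp (P + W)) := by
    have hle : trExp P ≤ Real.exp (opNorm W) * trExp (P + W) := by
      have := mul_le_mul_of_nonneg_left hB1 (Real.exp_pos (opNorm W)).le
      rwa [← mul_assoc, ← Real.exp_add, add_neg_cancel, Real.exp_zero, one_mul] at this
    calc Real.log (trExp P) ≤ Real.log (Real.exp (opNorm W) * trExp (P + W)) :=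
          Real.log_le_log hPpos hle
      _ = opNorm W + Real.log (trExp (P + W)) := by
          rw [Real.log_mul (Real.exp_pos _).ne' hMpos.ne', Real.log_exp]
  have h2 : Real.log (trExp (P + W))
      ≤ (1/2) * Real.log (trExp X) + (1/2) * Real.log (trExp Y) := by
    calc Real.log (trExp (P + W)) ≤ Real.log (Real.sqrt (trExp X) * Real.sqrt (trExp Y)) :=
          Real.log_le_log hMpos hA1
      _ = (1/2) * Real.log (trExp X) + (1/2) * Real.log (trExp Y) := by
          rw [Real.log_mul (Real.sqrt_pos.2 hXpos).ne' (Real.sqrt_pos.2 hYpos).ne',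
            Real.log_sqrt hXpos.le, Real.log_sqrt hYpos.le]
          ring
  linarith

end PeierlsAux

/-- For Hermitian `H`, `A`, `B` and `β > 0`:
`log Tr e^{-βH} - ½ log Tr e^{-β(H+A)} - ½ log Tr e^{-β(H+B)} ≤ (β/2)‖A + B‖`,
and in particular (taking `B = -A`) the symmetrized difference is `≤ 0`. -/
theorem logTrExp_symmetrized_bound {n : ℕ} (β : ℝ) (hβ : 0 < β)
    (H A B : Matrix (Fin n) (Fin n) ℂ)
    (hH : H.IsHermitian) (hA : A.IsHermitian) (hB : B.IsHermitian) :
    (Real.log (trExp ((-β : ℂ) • H))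
        - (1 / 2) * Real.log (trExp ((-β : ℂ) • (H + A)))
        - (1 / 2) * Real.log (trExp ((-β : ℂ) • (H + B)))
      ≤ (β / 2) * opNorm (A + B))
    ∧ (Real.log (trExp ((-β : ℂ) • H))
        - (1 / 2) * Real.log (trExp ((-β : ℂ) • (H + A)))
        - (1 / 2) * Real.log (trExp ((-β : ℂ) • (H - A)))
      ≤ 0) := by
  constructor
  · exact PeierlsAux.main_ineq β hβ H A B hH hA hB
  · have h := PeierlsAux.main_ineq β hβ H A (-A) hH hA hA.neg
    rw [show H + -A = H - A from (sub_eq_add_neg H A).symm] at h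
    have hz : opNorm (A + -A) = 0 := by
      rw [show A + -A = (0 : Matrix (Fin n) (Fin n) ℂ) from add_neg_cancel A, opNorm]
      simp
    rw [hz, mul_zero] at h
    exact h
end

section
/- The map V ↦ log Tr exp(H + V) on Hermitian n×n matrices is convex: for Hermitian H, A, B and t ∈ [0,1], log Tr exp(H + tA + (1-t)B) ≤ t · log Tr exp(H + A) + (1-t) · log Tr exp(H + B). -/
open Matrix

namespace PeierlsBogoliubov

open Finset Real

open Finset Real

/-- Jensen for the logarithm. -/
lemma jensen_log {ι : Type*} (s : Finset ι) (w y : ι → ℝ)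
    (hw : ∀ i ∈ s, 0 ≤ w i) (hw1 : ∑ i ∈ s, w i = 1) (hy : ∀ i ∈ s, 0 < y i) :
    ∑ i ∈ s, w i * Real.log (y i) ≤ Real.log (∑ i ∈ s, w i * y i) := by
  have h := convexOn_exp.map_sum_le (t := s) (w := w) (p := fun i => Real.log (y i))
    hw hw1 (fun i _ => Set.mem_univ _)
  simp only [smul_eq_mul] at h
  have h2 : Real.exp (∑ i ∈ s, w i * Real.log (y i)) ≤ ∑ i ∈ s, w i * y i := by
    refine h.trans_eq (Finset.sum_congr rfl fun i hi => ?_)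
    rw [Real.exp_log (hy i hi)]
  calc ∑ i ∈ s, w i * Real.log (y i)
      = Real.log (Real.exp (∑ i ∈ s, w i * Real.log (y i))) := (Real.log_exp _).symm
    _ ≤ Real.log (∑ i ∈ s, w i * y i) := Real.log_le_log (Real.exp_pos _) h2

/-- Klein-type inequality in eigenvalue coordinates. -/
lemma klein_sum {n : ℕ} (p ν : Fin n → ℝ) (c : Fin n → Fin n → ℝ)
    (hp : ∀ i, 0 < p i) (hp1 : ∑ i, p i = 1)
    (hc : ∀ i j, 0 ≤ c i j) (hrow : ∀ i, ∑ j, c i j = 1) (hcol : ∀ j, ∑ i, c i j = 1) :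
    (∑ i, ∑ j, p i * (c i j * ν j)) - ∑ i, p i * Real.log (p i)
      ≤ Real.log (∑ j, Real.exp (ν j)) := by
  set q : Fin n → ℝ := fun i => (∑ j, c i j * Real.exp (ν j)) / p i with hq
  have hnum : ∀ i, 0 < ∑ j, c i j * Real.exp (ν j) := by
    intro i
    obtain ⟨j, hj⟩ : ∃ j, c i j ≠ 0 := by
      by_contra h
      push_neg at h
      have := hrow i
      simp [h] at this
    have h1 : (0:ℝ) < c i j * Real.exp (ν j) :=
      mul_pos (lt_of_le_of_ne (hc i j) (Ne.symm hj)) (Real.exp_pos _)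
    have h2 : c i j * Real.exp (ν j) ≤ ∑ k, c i k * Real.exp (ν k) :=
      Finset.single_le_sum (fun k _ => mul_nonneg (hc i k) (Real.exp_pos _).le)
        (Finset.mem_univ j)
    linarith
  have hqpos : ∀ i, 0 < q i := fun i => div_pos (hnum i) (hp i)
  -- Step A
  have stepA : ∀ i, (∑ j, c i j * ν j) - Real.log (p i) ≤ Real.log (q i) := by
    intro i
    have hA := jensen_log Finset.univ (c i) (fun j => Real.exp (ν j) / p i)
      (fun j _ => hc i j) (hrow i)
      (fun j _ => div_pos (Real.exp_pos _) (hp i))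
    have hlhs : ∑ j, c i j * Real.log (Real.exp (ν j) / p i)
        = (∑ j, c i j * ν j) - Real.log (p i) := by
      have : ∀ j, c i j * Real.log (Real.exp (ν j) / p i)
          = c i j * ν j - c i j * Real.log (p i) := fun j => by
        rw [Real.log_div (Real.exp_ne_zero _) (hp i).ne', Real.log_exp, mul_sub]
      rw [Finset.sum_congr rfl (fun j _ => this j), Finset.sum_sub_distrib,
        ← Finset.sum_mul, hrow i, one_mul]
    have hrhs : ∑ j, c i j * (Real.exp (ν j) / p i) = q i := by
      simp only [hq, mul_div_assoc, Finset.sum_div]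
    rw [hlhs, hrhs] at hA
    exact hA
  -- Step B
  have stepB : ∑ i, p i * Real.log (q i) ≤ Real.log (∑ j, Real.exp (ν j)) := by
    have hB := jensen_log Finset.univ p q (fun i _ => (hp i).le) hp1 (fun i _ => hqpos i)
    have : ∑ i, p i * q i = ∑ j, Real.exp (ν j) := by
      rw [Finset.sum_congr rfl (fun i _ => by
        rw [hq, mul_div_cancel₀ _ (hp i).ne'])]
      rw [Finset.sum_comm]
      exact Finset.sum_congr rfl (fun j _ => by rw [← Finset.sum_mul, hcol j, one_mul])
    rwa [this] at hB
  calc (∑ i, ∑ j, p i * (c i j * ν j)) - ∑ i, p i * Real.log (p i)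
      = ∑ i, p i * ((∑ j, c i j * ν j) - Real.log (p i)) := by
        rw [← Finset.sum_sub_distrib]
        exact Finset.sum_congr rfl (fun i _ => by rw [mul_sub, Finset.mul_sum])
    _ ≤ ∑ i, p i * Real.log (q i) :=
        Finset.sum_le_sum fun i _ => mul_le_mul_of_nonneg_left (stepA i) (hp i).le
    _ ≤ _ := stepB



variable {n : ℕ}

noncomputable def U {M : Matrix (Fin n) (Fin n) ℂ} (hM : M.IsHermitian) :
    Matrix (Fin n) (Fin n) ℂ := (hM.eigenvectorUnitary : Matrix (Fin n) (Fin n) ℂ)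

lemma U_def {M : Matrix (Fin n) (Fin n) ℂ} (hM : M.IsHermitian) :
    (hM.eigenvectorUnitary : Matrix (Fin n) (Fin n) ℂ) = U hM := rfl

lemma U_mul_star {M : Matrix (Fin n) (Fin n) ℂ} (hM : M.IsHermitian) :
    U hM * star (U hM) = 1 :=
  (Matrix.mem_unitaryGroup_iff).mp hM.eigenvectorUnitary.2

lemma star_mul_U {M : Matrix (Fin n) (Fin n) ℂ} (hM : M.IsHermitian) :
    star (U hM) * U hM = 1 :=
  (Matrix.mem_unitaryGroup_iff').mp hM.eigenvectorUnitary.2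

lemma trace_conj {A V : Matrix (Fin n) (Fin n) ℂ} (hV : star V * V = 1) :
    (V * A * star V).trace = A.trace := by
  rw [Matrix.trace_mul_cycle, hV, Matrix.one_mul]

lemma exp_hermitian {M : Matrix (Fin n) (Fin n) ℂ} (hM : M.IsHermitian) :
    NormedSpace.exp M
      = U hM * diagonal (fun i => ((Real.exp (hM.eigenvalues i) : ℝ) : ℂ)) * star (U hM) := by
  have hUnit : IsUnit (U hM) := ⟨⟨U hM, star (U hM), U_mul_star hM, star_mul_U hM⟩, rfl⟩
  have hUinv : (U hM)⁻¹ = star (U hM) := Matrix.inv_eq_right_inv (U_mul_star hM)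
  conv_lhs => rw [hM.spectral_theorem, Unitary.conjStarAlgAut_apply]
  rw [U_def]
  rw [show (star (U hM) : Matrix (Fin n) (Fin n) ℂ) = (U hM)⁻¹ from hUinv.symm]
  rw [Matrix.exp_conj (U hM) _ hUnit, Matrix.exp_diagonal, hUinv]
  congr 2
  ext i
  rw [Pi.exp_def]
  simp only [Function.comp_apply, RCLike.ofReal_alg]
  rw [← Complex.exp_eq_exp_ℂ]
  simp [Complex.ofReal_exp]

lemma trExp_eq {M : Matrix (Fin n) (Fin n) ℂ} (hM : M.IsHermitian) :
    ((NormedSpace.exp M).trace).re = ∑ i, Real.exp (hM.eigenvalues i) := by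
  rw [exp_hermitian hM, trace_conj (star_mul_U hM), Matrix.trace_diagonal]
  rw [Complex.re_sum]
  exact Finset.sum_congr rfl fun i _ => Complex.ofReal_re _

lemma trace_diag_conj (a b : Fin n → ℂ) (W : Matrix (Fin n) (Fin n) ℂ) :
    (diagonal a * W * diagonal b * star W).trace
      = ∑ i, ∑ j, a i * W i j * b j * star (W i j) := by
  rw [Matrix.star_eq_conjTranspose, Matrix.trace]
  simp only [Matrix.diag_apply, Matrix.mul_apply, Matrix.diagonal_apply,
    Matrix.conjTranspose_apply]
  refine Finset.sum_congr rfl fun i _ => Finset.sum_congr rfl fun j _ => ?_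
  simp [Finset.sum_mul, Finset.mul_sum]



variable {n : ℕ}

lemma mul_star_re (z : ℂ) : (z * star z).re = Complex.normSq z := by
  rw [show star z = (starRingEnd ℂ) z from rfl, Complex.mul_conj, Complex.ofReal_re]

lemma star_mul_re (z : ℂ) : (star z * z).re = Complex.normSq z := by
  rw [show star z = (starRingEnd ℂ) z from rfl, mul_comm, Complex.mul_conj, Complex.ofReal_re]

lemma normSq_row_sum (W : Matrix (Fin n) (Fin n) ℂ) (h : W * star W = 1) (i : Fin n) :
    ∑ j, Complex.normSq (W i j) = 1 := by
  have h1 := congrArg (fun M : Matrix (Fin n) (Fin n) ℂ => (M i i).re) h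
  simp only [Matrix.mul_apply, Matrix.star_eq_conjTranspose, Matrix.conjTranspose_apply,
    Matrix.one_apply_eq, Complex.one_re] at h1
  rw [← h1, Complex.re_sum]
  exact Finset.sum_congr rfl fun j _ => (mul_star_re _).symm

lemma normSq_col_sum (W : Matrix (Fin n) (Fin n) ℂ) (h : star W * W = 1) (j : Fin n) :
    ∑ i, Complex.normSq (W i j) = 1 := by
  have h1 := congrArg (fun M : Matrix (Fin n) (Fin n) ℂ => (M j j).re) h
  simp only [Matrix.mul_apply, Matrix.star_eq_conjTranspose, Matrix.conjTranspose_apply,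
    Matrix.one_apply_eq, Complex.one_re] at h1
  rw [← h1, Complex.re_sum]
  exact Finset.sum_congr rfl fun i _ => (star_mul_re _).symm

lemma exp_mul_eq {M X : Matrix (Fin n) (Fin n) ℂ} (hM : M.IsHermitian) (hX : X.IsHermitian) :
    NormedSpace.exp M * X
      = U hM * (diagonal (fun i => ((Real.exp (hM.eigenvalues i) : ℝ) : ℂ))
          * (star (U hM) * U hX) * diagonal (RCLike.ofReal ∘ hX.eigenvalues)
          * star (star (U hM) * U hX)) * star (U hM) := by
  rw [exp_hermitian hM]
  conv_lhs => rw [hX.spectral_theorem, Unitary.conjStarAlgAut_apply, U_def hX]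
  simp only [Matrix.star_mul, star_star, Matrix.mul_assoc]
  rw [U_mul_star hM, Matrix.mul_one]

lemma trace_exp_mul_re {M X : Matrix (Fin n) (Fin n) ℂ} (hM : M.IsHermitian)
    (hX : X.IsHermitian) :
    (((NormedSpace.exp M) * X).trace).re
      = ∑ i, ∑ j, Real.exp (hM.eigenvalues i)
          * (hX.eigenvalues j * Complex.normSq ((star (U hM) * U hX) i j)) := by
  rw [exp_mul_eq hM hX, trace_conj (star_mul_U hM), trace_diag_conj, Complex.re_sum]
  refine Finset.sum_congr rfl fun i _ => ?_
  rw [Complex.re_sum]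
  refine Finset.sum_congr rfl fun j _ => ?_
  set w := (star (U hM) * U hX) i j with hw
  have hb : ((RCLike.ofReal ∘ hX.eigenvalues) j : ℂ) = ((hX.eigenvalues j : ℝ) : ℂ) := rfl
  rw [hb]
  have h1 : ((Real.exp (hM.eigenvalues i) : ℝ) : ℂ) * w * ((hX.eigenvalues j : ℝ) : ℂ) * star w
      = ((Real.exp (hM.eigenvalues i) * (hX.eigenvalues j * Complex.normSq w) : ℝ) : ℂ) := by
    rw [show (star w : ℂ) = (starRingEnd ℂ) w from rfl]
    rw [show ((Real.exp (hM.eigenvalues i) : ℝ) : ℂ) * w * ((hX.eigenvalues j : ℝ) : ℂ)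
          * (starRingEnd ℂ) w
        = ((Real.exp (hM.eigenvalues i) : ℝ) : ℂ) * ((hX.eigenvalues j : ℝ) : ℂ)
          * (w * (starRingEnd ℂ) w) from by ring]
    rw [Complex.mul_conj]
    push_cast
    ring
  rw [h1, Complex.ofReal_re]

lemma W_mul_star {M X : Matrix (Fin n) (Fin n) ℂ} (hM : M.IsHermitian) (hX : X.IsHermitian) :
    (star (U hM) * U hX) * star (star (U hM) * U hX) = 1 := by
  have h : (star (U hM) * U hX) * star (star (U hM) * U hX)
      = star (U hM) * ((U hX * star (U hX)) * U hM) := by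
    simp only [Matrix.star_mul, star_star, Matrix.mul_assoc]
  rw [h, U_mul_star hX, Matrix.one_mul, star_mul_U hM]

lemma star_W_mul {M X : Matrix (Fin n) (Fin n) ℂ} (hM : M.IsHermitian) (hX : X.IsHermitian) :
    star (star (U hM) * U hX) * (star (U hM) * U hX) = 1 := by
  have h : star (star (U hM) * U hX) * (star (U hM) * U hX)
      = star (U hX) * ((U hM * star (U hM)) * U hX) := by
    simp only [Matrix.star_mul, star_star, Matrix.mul_assoc]
  rw [h, U_mul_star hM, Matrix.one_mul, star_mul_U hX]

/-- Klein / Gibbs variational inequality for matrices. -/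
lemma klein_matrix {M X : Matrix (Fin n) (Fin n) ℂ} (hM : M.IsHermitian) (hX : X.IsHermitian)
    (hZ : 0 < ∑ i, Real.exp (hM.eigenvalues i)) :
    (((NormedSpace.exp M) * X).trace).re
      ≤ (∑ i, Real.exp (hM.eigenvalues i) * hM.eigenvalues i)
        - (∑ i, Real.exp (hM.eigenvalues i)) * Real.log (∑ i, Real.exp (hM.eigenvalues i))
        + (∑ i, Real.exp (hM.eigenvalues i)) * Real.log (∑ j, Real.exp (hX.eigenvalues j)) := by
  set μ := hM.eigenvalues with hμ
  set ν := hX.eigenvalues with hν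
  set Z := ∑ i, Real.exp (μ i) with hZdef
  set c : Fin n → Fin n → ℝ := fun i j => Complex.normSq ((star (U hM) * U hX) i j) with hcdef
  set p : Fin n → ℝ := fun i => Real.exp (μ i) / Z with hpdef
  have hp : ∀ i, 0 < p i := fun i => div_pos (Real.exp_pos _) hZ
  have hp1 : ∑ i, p i = 1 := by rw [hpdef, ← Finset.sum_div, ← hZdef, div_self hZ.ne']
  have hc : ∀ i j, 0 ≤ c i j := fun i j => Complex.normSq_nonneg _
  have hrow : ∀ i, ∑ j, c i j = 1 := normSq_row_sum _ (W_mul_star hM hX)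
  have hcol : ∀ j, ∑ i, c i j = 1 := normSq_col_sum _ (star_W_mul hM hX)
  have key := klein_sum p ν c hp hp1 hc hrow hcol
  have hTr : (((NormedSpace.exp M) * X).trace).re = Z * ∑ i, ∑ j, p i * (c i j * ν j) := by
    rw [trace_exp_mul_re hM hX, Finset.mul_sum]
    refine Finset.sum_congr rfl fun i _ => ?_
    rw [Finset.mul_sum]
    refine Finset.sum_congr rfl fun j _ => ?_
    rw [hpdef]
    field_simp
    ring
  have hL : ∑ i, p i * Real.log (p i) = (∑ i, Real.exp (μ i) * μ i) / Z - Real.log Z := by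
    have : ∀ i, p i * Real.log (p i) = Real.exp (μ i) * μ i / Z - p i * Real.log Z := by
      intro i
      rw [hpdef]
      rw [Real.log_div (Real.exp_ne_zero _) hZ.ne', Real.log_exp]
      ring
    rw [Finset.sum_congr rfl (fun i _ => this i), Finset.sum_sub_distrib,
      ← Finset.sum_div, ← Finset.sum_mul, hp1, one_mul]
  have hfinal : ∑ i, ∑ j, p i * (c i j * ν j)
      ≤ (∑ i, Real.exp (μ i) * μ i) / Z - Real.log Z + Real.log (∑ j, Real.exp (ν j)) := by
    rw [← hL]; linarith [key]
  calc (((NormedSpace.exp M) * X).trace).re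
      = Z * ∑ i, ∑ j, p i * (c i j * ν j) := hTr
    _ ≤ Z * ((∑ i, Real.exp (μ i) * μ i) / Z - Real.log Z + Real.log (∑ j, Real.exp (ν j))) :=
        mul_le_mul_of_nonneg_left hfinal hZ.le
    _ = (∑ i, Real.exp (μ i) * μ i) - Z * Real.log Z + Z * Real.log (∑ j, Real.exp (ν j)) := by
        field_simp

end PeierlsBogoliubov

/-- Peierls–Bogoliubov convexity: the map `V ↦ log Tr exp(H + V)` on Hermitian matrices
is convex along real segments. -/
theorem logTrExp_convex {n : ℕ} (H A B : Matrix (Fin n) (Fin n) ℂ)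
    (hH : H.IsHermitian) (hA : A.IsHermitian) (hB : B.IsHermitian)
    (t : ℝ) (ht : t ∈ Set.Icc (0 : ℝ) 1) :
    Real.log (trExp (H + (t : ℂ) • A + ((1 - t : ℝ) : ℂ) • B))
      ≤ t * Real.log (trExp (H + A)) + (1 - t) * Real.log (trExp (H + B)) := by
  open PeierlsBogoliubov in
  obtain ⟨ht0, ht1⟩ := ht
  rcases Nat.eq_zero_or_pos n with rfl | hn
  · simp [trExp, Matrix.trace]
  · have : Nonempty (Fin n) := Fin.pos_iff_nonempty.mp hn
    set X := H + A with hXdef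
    set Y := H + B with hYdef
    have hX : X.IsHermitian := hH.add hA
    have hY : Y.IsHermitian := hH.add hB
    have hsm : ∀ (r : ℝ) (C : Matrix (Fin n) (Fin n) ℂ), C.IsHermitian
        → ((r : ℂ) • C).IsHermitian := by
      intro r C hC
      unfold Matrix.IsHermitian at *
      rw [Matrix.conjTranspose_smul, hC]
      congr 1
      exact Complex.conj_ofReal r
    set M := (t : ℂ) • X + ((1 - t : ℝ) : ℂ) • Y with hMdef
    have hM : M.IsHermitian := (hsm t X hX).add (hsm (1 - t) Y hY)
    have hMeq : H + (t : ℂ) • A + ((1 - t : ℝ) : ℂ) • B = M := by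
      rw [hMdef, hXdef, hYdef, smul_add, smul_add]
      have hH1 : (t : ℂ) • H + ((1 - t : ℝ) : ℂ) • H = H := by
        rw [← add_smul]
        norm_num
      rw [show (t : ℂ) • H + (t : ℂ) • A + (((1 - t : ℝ) : ℂ) • H + ((1 - t : ℝ) : ℂ) • B)
            = ((t : ℂ) • H + ((1 - t : ℝ) : ℂ) • H) + ((t : ℂ) • A + ((1 - t : ℝ) : ℂ) • B)
          from by abel, hH1]
      abel
    set μ := hM.eigenvalues with hμ
    set Z := ∑ i, Real.exp (μ i) with hZdef
    have hZ : 0 < Z := Finset.sum_pos (fun i _ => Real.exp_pos _) Finset.univ_nonempty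
    have hZX : 0 < ∑ i, Real.exp (hX.eigenvalues i) :=
      Finset.sum_pos (fun i _ => Real.exp_pos _) Finset.univ_nonempty
    have hZY : 0 < ∑ i, Real.exp (hY.eigenvalues i) :=
      Finset.sum_pos (fun i _ => Real.exp_pos _) Finset.univ_nonempty
    -- energy identity
    have hE : (((NormedSpace.exp M) * M).trace).re = ∑ i, Real.exp (μ i) * μ i := by
      rw [trace_exp_mul_re hM hM, ]
      rw [show (star (U hM) * U hM) = (1 : Matrix (Fin n) (Fin n) ℂ) from star_mul_U hM]
      refine Finset.sum_congr rfl fun i _ => ?_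
      rw [Finset.sum_eq_single i]
      · simp [hμ]
      · intro j _ hj
        simp [Matrix.one_apply_ne' hj]
      · intro h
        exact absurd (Finset.mem_univ i) h
    -- linearity
    have hlin : (((NormedSpace.exp M) * M).trace).re
        = t * (((NormedSpace.exp M) * X).trace).re
          + (1 - t) * (((NormedSpace.exp M) * Y).trace).re := by
      have hsplit : NormedSpace.exp M * M
          = (t : ℂ) • (NormedSpace.exp M * X) + ((1 - t : ℝ) : ℂ) • (NormedSpace.exp M * Y) := by
        nth_rewrite 2 [hMdef]
        rw [Matrix.mul_add, mul_smul_comm, mul_smul_comm]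
      rw [hsplit, Matrix.trace_add, Matrix.trace_smul, Matrix.trace_smul, Complex.add_re,
        smul_eq_mul, smul_eq_mul, Complex.re_ofReal_mul, Complex.re_ofReal_mul]
    have kX := klein_matrix hM hX hZ
    have kY := klein_matrix hM hY hZ
    rw [← hμ, ← hZdef] at kX kY
    have h1 := mul_le_mul_of_nonneg_left kX ht0
    have h2 := mul_le_mul_of_nonneg_left kY (by linarith : (0:ℝ) ≤ 1 - t)
    have key : Z * Real.log Z
        ≤ Z * (t * Real.log (∑ i, Real.exp (hX.eigenvalues i))
            + (1 - t) * Real.log (∑ i, Real.exp (hY.eigenvalues i))) := by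
      nlinarith [h1, h2, hE, hlin]
    have hfin : Real.log Z ≤ t * Real.log (∑ i, Real.exp (hX.eigenvalues i))
        + (1 - t) * Real.log (∑ i, Real.exp (hY.eigenvalues i)) :=
      (mul_le_mul_iff_right₀ hZ).mp key
    have htrM : trExp (H + (t : ℂ) • A + ((1 - t : ℝ) : ℂ) • B) = Z := by
      rw [hMeq]
      exact trExp_eq hM
    have htrX : trExp (H + A) = ∑ i, Real.exp (hX.eigenvalues i) := trExp_eq hX
    have htrY : trExp (H + B) = ∑ i, Real.exp (hY.eigenvalues i) := trExp_eq hY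
    rw [htrM, htrX, htrY]
    exact hfin
end
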